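/- Let A be a Poisson algebra over a field k. Assume that for every prime Poisson ideal P of A there exist a finite subset Σ ⊆ P and an element s ∈ A \ P such that P = {Σ} : s, where {Σ} denotes the smallest radical Poisson ideal of A containing Σ and {Σ} : s = {r ∈ A : rs ∈ {Σ}}. Then A satisfies the ACC on radical Poisson ideals. -/

import Mathlib

/-- `B` is a Poisson bracket on the commutative `k`-algebra `A`: it is `k`-bilinear
(additivity and `k`-homogeneity in the first argument, together with antisymmetry, give
bilinearity), antisymmetric, satisfies the Jacobi identity, and is a derivation in each
argument. -/
def IsPoissonBracket (k : Type*) {A : Type*} [CommRing k] [CommRing A] [Algebra k A]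
    (B : A → A → A) : Prop :=
  (∀ a b c : A, B (a + b) c = B a c + B b c) ∧
  (∀ (r : k) (a b : A), B (r • a) b = r • B a b) ∧
  (∀ a b : A, B a b = - B b a) ∧
  (∀ a b c : A, B a (B b c) + B b (B c a) + B c (B a b) = 0) ∧
  (∀ a b c : A, B a (b * c) = B a b * c + b * B a c)

/-- An ideal `I` is a Poisson ideal for the bracket `B` if `{A, I} ⊆ I`. -/
def IsPoissonIdeal {A : Type*} [CommRing A] (B : A → A → A) (I : Ideal A) : Prop :=
  ∀ x : A, ∀ y ∈ I, B x y ∈ I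

/-- `A` satisfies the ascending chain condition on radical Poisson ideals. -/
def PoissonRadicalACC {A : Type*} [CommRing A] (B : A → A → A) : Prop :=
  ∀ c : ℕ → Ideal A, (∀ n, IsPoissonIdeal B (c n)) → (∀ n, (c n).IsRadical) →
    Monotone c → ∃ N, ∀ n, N ≤ n → c n = c N

/-- The division ideal `I : s = {r ∈ A | r * s ∈ I}`. -/
def idealDiv {A : Type*} [CommRing A] (I : Ideal A) (s : A) : Ideal A where
  carrier := {r : A | r * s ∈ I}
  zero_mem' := by simp
  add_mem' := by
    intro a b ha hb
    simpa [add_mul] using I.add_mem ha hb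
  smul_mem' := by
    intro c a ha
    simp only [Set.mem_setOf_eq, smul_eq_mul] at *
    rw [mul_assoc]
    exact I.mul_mem_left c ha

/-- The smallest radical Poisson ideal containing a subset `S` of `A`. -/
def radPoissonGen {A : Type*} [CommRing A] (B : A → A → A) (S : Set A) : Ideal A :=
  sInf {I : Ideal A | IsPoissonIdeal B I ∧ I.IsRadical ∧ S ⊆ (I : Set A)}

namespace PoissonAux

variable {A : Type*} [CommRing A] (B : A → A → A)

theorem rpg_isPoisson (S : Set A) : IsPoissonIdeal B (radPoissonGen B S) := by
  intro x y hy
  rw [radPoissonGen, Ideal.mem_sInf] at hy ⊢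
  intro I hI
  exact hI.1 x y (hy hI)

theorem rpg_isRadical (S : Set A) : (radPoissonGen B S).IsRadical := by
  intro r hr
  obtain ⟨n, hn⟩ := Ideal.mem_radical_iff.mp hr
  rw [radPoissonGen, Ideal.mem_sInf] at hn ⊢
  intro I hI
  exact hI.2.1 (Ideal.mem_radical_iff.mpr ⟨n, hn hI⟩)

theorem subset_rpg (S : Set A) : S ⊆ (radPoissonGen B S : Set A) := by
  intro t ht
  rw [SetLike.mem_coe, radPoissonGen, Ideal.mem_sInf]
  intro I hI
  exact hI.2.2 ht

theorem rpg_le {S : Set A} {I : Ideal A} (h1 : IsPoissonIdeal B I) (h2 : I.IsRadical)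
    (h3 : S ⊆ (I : Set A)) : radPoissonGen B S ≤ I :=
  sInf_le ⟨h1, h2, h3⟩

theorem rpg_mono {S T : Set A} (h : S ⊆ T) : radPoissonGen B S ≤ radPoissonGen B T :=
  rpg_le B (rpg_isPoisson B T) (rpg_isRadical B T) (h.trans (subset_rpg B T))

variable (hd : ∀ x b c : A, B x (b * c) = B x b * c + b * B x c)
include hd

theorem key {I : Ideal A} (hP : IsPoissonIdeal B I) (hR : I.IsRadical) {a b : A}
    (hab : a * b ∈ I) (x : A) : a * B x b ∈ I := by
  have h1 : B x (a * b) ∈ I := hP x _ hab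
  have h2 : (a * B x b) ^ 2 = (a * B x b) * B x (a * b) - (a * b) * (B x a * B x b) := by
    rw [hd]; ring
  exact hR (Ideal.mem_radical_iff.mpr
    ⟨2, h2 ▸ I.sub_mem (I.mul_mem_left _ h1) (I.mul_mem_right _ hab)⟩)

theorem idealDiv_isPoisson {I : Ideal A} (hP : IsPoissonIdeal B I) (hR : I.IsRadical)
    (s : A) : IsPoissonIdeal B (idealDiv I s) := by
  intro x y hy
  have h1 : s * y ∈ I := by rw [mul_comm]; exact hy
  have h2 : s * B x y ∈ I := key B hd hP hR h1 x
  show B x y * s ∈ I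
  rwa [mul_comm]

omit hd in
theorem idealDiv_isRadical {I : Ideal A} (hR : I.IsRadical) (s : A) :
    (idealDiv I s).IsRadical := by
  intro r hr
  obtain ⟨n, hn⟩ := Ideal.mem_radical_iff.mp hr
  have hn' : r ^ n * s ∈ I := hn
  show r * s ∈ I
  cases n with
  | zero =>
      simp only [pow_zero, one_mul] at hn'
      exact I.mul_mem_left r hn'
  | succ n =>
      have heq : (r * s) ^ (n + 1) = (r ^ (n + 1) * s) * s ^ n := by ring
      exact hR (Ideal.mem_radical_iff.mpr ⟨n + 1, heq ▸ I.mul_mem_right _ hn'⟩)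

theorem scale_mem {S : Set A} {J : Ideal A} (hJP : IsPoissonIdeal B J) (hJR : J.IsRadical)
    {a x : A} (h : ∀ t ∈ S, a * t ∈ J) (hx : x ∈ radPoissonGen B S) : a * x ∈ J := by
  have hle : radPoissonGen B S ≤ idealDiv J a := by
    apply rpg_le B (idealDiv_isPoisson B hd hJP hJR a) (idealDiv_isRadical hJR a)
    intro t ht
    show t * a ∈ J
    rw [mul_comm]
    exact h t ht
  have : x * a ∈ J := hle hx
  rwa [mul_comm]

omit hd

theorem sSup_isPoisson {s : Set (Ideal A)} (hne : s.Nonempty) (hdir : DirectedOn (· ≤ ·) s)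
    (h : ∀ I ∈ s, IsPoissonIdeal B I) : IsPoissonIdeal B (sSup s) := by
  intro x y hy
  rw [Submodule.mem_sSup_of_directed hne hdir] at hy ⊢
  obtain ⟨I, hI, hyI⟩ := hy
  exact ⟨I, hI, h I hI x y hyI⟩

theorem sSup_isRadical {s : Set (Ideal A)} (hne : s.Nonempty) (hdir : DirectedOn (· ≤ ·) s)
    (h : ∀ I ∈ s, Ideal.IsRadical I) : (sSup s).IsRadical := by
  intro r hr
  obtain ⟨n, hn⟩ := Ideal.mem_radical_iff.mp hr
  rw [Submodule.mem_sSup_of_directed hne hdir] at hn ⊢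
  obtain ⟨I, hI, hnI⟩ := hn
  exact ⟨I, hI, h I hI (Ideal.mem_radical_iff.mpr ⟨n, hnI⟩)⟩

theorem finset_subset_of_directed {s : Set (Ideal A)} (hne : s.Nonempty)
    (hdir : DirectedOn (· ≤ ·) s) (F : Finset A) (h : ∀ x ∈ F, x ∈ sSup s) :
    ∃ I ∈ s, ∀ x ∈ F, x ∈ I := by
  classical
  induction F using Finset.induction with
  | empty =>
      obtain ⟨I, hI⟩ := hne
      exact ⟨I, hI, by simp⟩
  | insert _ _ ha ih =>
      rename_i a F
      obtain ⟨I, hIs, hIF⟩ := ih (fun x hx => h x (Finset.mem_insert_of_mem hx))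
      have ha' := h a (Finset.mem_insert_self a F)
      rw [Submodule.mem_sSup_of_directed hne hdir] at ha'
      obtain ⟨J, hJs, haJ⟩ := ha'
      obtain ⟨K, hKs, hIK, hJK⟩ := hdir I hIs J hJs
      refine ⟨K, hKs, fun x hx => ?_⟩
      rcases Finset.mem_insert.mp hx with rfl | hx
      · exact hJK haJ
      · exact hIK (hIF x hx)

theorem rpg_finite_basis_subset (S : Set A) (F0 : Finset A)
    (hS : radPoissonGen B S = radPoissonGen B (↑F0 : Set A)) :
    ∃ F : Finset A, (↑F : Set A) ⊆ S ∧ radPoissonGen B S = radPoissonGen B (↑F : Set A) := by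
  classical
  set s : Set (Ideal A) :=
    {I | ∃ F : Finset A, (↑F : Set A) ⊆ S ∧ I = radPoissonGen B (↑F : Set A)} with hs
  have hne : s.Nonempty := ⟨radPoissonGen B (↑(∅ : Finset A) : Set A), ∅, by simp, rfl⟩
  have hdir : DirectedOn (· ≤ ·) s := by
    rintro I ⟨F1, hF1, rfl⟩ J ⟨F2, hF2, rfl⟩
    refine ⟨radPoissonGen B (↑(F1 ∪ F2) : Set A), ⟨F1 ∪ F2, ?_, rfl⟩, ?_, ?_⟩
    · rw [Finset.coe_union]; exact Set.union_subset hF1 hF2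
    · exact rpg_mono B (by rw [Finset.coe_union]; exact Set.subset_union_left)
    · exact rpg_mono B (by rw [Finset.coe_union]; exact Set.subset_union_right)
  have hSU : ∀ t ∈ S, t ∈ sSup s := by
    intro t ht
    rw [Submodule.mem_sSup_of_directed hne hdir]
    exact ⟨radPoissonGen B (↑({t} : Finset A) : Set A), ⟨{t}, by simpa using ht, rfl⟩,
      subset_rpg B _ (by simp)⟩
  have hUP : IsPoissonIdeal B (sSup s) :=
    sSup_isPoisson B hne hdir (by rintro I ⟨F, -, rfl⟩; exact rpg_isPoisson B _)
  have hUR : (sSup s).IsRadical :=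
    sSup_isRadical hne hdir (by rintro I ⟨F, -, rfl⟩; exact rpg_isRadical B _)
  have hle : radPoissonGen B S ≤ sSup s := rpg_le B hUP hUR hSU
  have hF0U : ∀ x ∈ F0, x ∈ sSup s := by
    intro x hx
    exact hle (hS ▸ subset_rpg B (↑F0 : Set A) (by exact_mod_cast hx))
  obtain ⟨I, ⟨F, hFS, rfl⟩, hF0I⟩ := finset_subset_of_directed hne hdir F0 hF0U
  refine ⟨F, hFS, le_antisymm ?_ (rpg_mono B hFS)⟩
  rw [hS]
  exact rpg_le B (rpg_isPoisson B _) (rpg_isRadical B _) (fun x hx => hF0I x (by exact_mod_cast hx))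

end PoissonAux

/-- Let `A` be a Poisson algebra over a field `k`. If every prime Poisson
ideal `P` of `A` is of the form `{Σ} : s` for some finite `Σ ⊆ P` and `s ∈ A \ P`, where
`{Σ}` is the smallest radical Poisson ideal containing `Σ`, then `A` satisfies the ACC on
radical Poisson ideals. -/
theorem poissonRadicalACC_of_prime_div {k A : Type*} [Field k] [CommRing A] [Algebra k A]
    (B : A → A → A) (hB : IsPoissonBracket k B)
    (hyp : ∀ P : Ideal A, P.IsPrime → IsPoissonIdeal B P →
      ∃ Fs : Finset A, (↑Fs : Set A) ⊆ (P : Set A) ∧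
        ∃ s : A, s ∉ P ∧ P = idealDiv (radPoissonGen B (↑Fs : Set A)) s) :
    PoissonRadicalACC B := by
  classical
  obtain ⟨-, -, -, -, hd⟩ := hB
  show ∀ c : ℕ → Ideal A, (∀ n, IsPoissonIdeal B (c n)) → (∀ n, (c n).IsRadical) →
    Monotone c → ∃ N, ∀ n, N ≤ n → c n = c N
  have main : ∀ I : Ideal A, IsPoissonIdeal B I → I.IsRadical →
      ∃ F : Finset A, I = radPoissonGen B (↑F : Set A) := by
    intro I₀ hI₀P hI₀R
    by_contra hbad0
    set bad : Set (Ideal A) :=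
      {I | IsPoissonIdeal B I ∧ I.IsRadical ∧
        ¬∃ F : Finset A, I = radPoissonGen B (↑F : Set A)} with hbadset
    have hchain : ∀ c ⊆ bad, IsChain (· ≤ ·) c → ∀ y ∈ c, ∃ ub ∈ bad, ∀ z ∈ c, z ≤ ub := by
      intro c hc hch y hy
      have hne : c.Nonempty := ⟨y, hy⟩
      have hdir := hch.directedOn
      refine ⟨sSup c, ⟨PoissonAux.sSup_isPoisson B hne hdir (fun I hI => (hc hI).1),
        PoissonAux.sSup_isRadical hne hdir (fun I hI => (hc hI).2.1), ?_⟩,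
        fun z hz => le_sSup hz⟩
      rintro ⟨F, hF⟩
      obtain ⟨I, hIc, hFI⟩ := PoissonAux.finset_subset_of_directed hne hdir F
        (fun x hx => by
          have : x ∈ radPoissonGen B (↑F : Set A) :=
            PoissonAux.subset_rpg B _ (by exact_mod_cast hx)
          rwa [← hF] at this)
      have hle : sSup c ≤ I := by
        rw [hF]
        exact PoissonAux.rpg_le B (hc hIc).1 (hc hIc).2.1
          (fun x hx => hFI x (by exact_mod_cast hx))
      have hIeq : I = sSup c := le_antisymm (le_sSup hIc) hle
      exact (hc hIc).2.2 ⟨F, hIeq.trans hF⟩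
    obtain ⟨P, -, hPm⟩ := zorn_le_nonempty₀ bad hchain I₀ ⟨hI₀P, hI₀R, hbad0⟩
    obtain ⟨hPP, hPR, hPnb⟩ := hPm.1
    have hgood : ∀ t : A, t ∉ P →
        ∃ F : Finset A, radPoissonGen B ((↑P : Set A) ∪ {t}) = radPoissonGen B (↑F : Set A) := by
      intro t ht
      by_contra hng
      have hmem : radPoissonGen B ((↑P : Set A) ∪ {t}) ∈ bad :=
        ⟨PoissonAux.rpg_isPoisson B _, PoissonAux.rpg_isRadical B _, hng⟩
      have hPle : P ≤ radPoissonGen B ((↑P : Set A) ∪ {t}) :=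
        fun p hp => PoissonAux.subset_rpg B _ (Or.inl hp)
      exact ht (hPm.2 hmem hPle (PoissonAux.subset_rpg B _ (Or.inr rfl)))
    have hPne : P ≠ ⊤ := by
      intro h
      apply hPnb
      refine ⟨{1}, ?_⟩
      rw [h]
      exact ((Ideal.eq_top_iff_one _).mpr (PoissonAux.subset_rpg B _ (by simp))).symm
    have memP : ∀ a b y : A, a * b ∈ P → y ∈ radPoissonGen B ((↑P : Set A) ∪ {a}) →
        y ∈ radPoissonGen B ((↑P : Set A) ∪ {b}) → y ∈ P := by
      intro a b y hab hya hyb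
      have h1 : a * y ∈ P := by
        refine PoissonAux.scale_mem B hd hPP hPR (fun t ht => ?_) hyb
        rcases ht with ht | ht
        · exact P.mul_mem_left a ht
        · rw [Set.mem_singleton_iff] at ht; subst ht; exact hab
      have h2 : y * y ∈ P := by
        refine PoissonAux.scale_mem B hd hPP hPR (fun t ht => ?_) hya
        rcases ht with ht | ht
        · exact P.mul_mem_left y ht
        · rw [Set.mem_singleton_iff] at ht; subst ht; rw [mul_comm]; exact h1
      exact hPR (Ideal.mem_radical_iff.mpr ⟨2, by rwa [pow_two]⟩)
    have hprime : P.IsPrime := by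
      refine ⟨hPne, ?_⟩
      intro a b hab
      by_contra hcon
      push_neg at hcon
      obtain ⟨ha, hb⟩ := hcon
      obtain ⟨Fa, hFa⟩ := hgood a ha
      obtain ⟨Fb, hFb⟩ := hgood b hb
      set Fab : Finset A := Finset.image₂ (· * ·) Fa Fb with hFabdef
      apply hPnb
      refine ⟨Fab, le_antisymm ?_ ?_⟩
      · intro x hx
        have hxa : x ∈ radPoissonGen B (↑Fa : Set A) := by
          rw [← hFa]; exact PoissonAux.subset_rpg B _ (Or.inl hx)
        have hxb : x ∈ radPoissonGen B (↑Fb : Set A) := by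
          rw [← hFb]; exact PoissonAux.subset_rpg B _ (Or.inl hx)
        have step : ∀ t ∈ (↑Fa : Set A), t * x ∈ radPoissonGen B (↑Fab : Set A) := by
          intro t ht
          refine PoissonAux.scale_mem B hd (PoissonAux.rpg_isPoisson B _)
            (PoissonAux.rpg_isRadical B _) (fun u hu => ?_) hxb
          refine PoissonAux.subset_rpg B _ ?_
          rw [hFabdef, Finset.coe_image₂]
          exact ⟨t, ht, u, hu, rfl⟩
        have hxx : x * x ∈ radPoissonGen B (↑Fab : Set A) := by
          refine PoissonAux.scale_mem B hd (PoissonAux.rpg_isPoisson B _)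
            (PoissonAux.rpg_isRadical B _) (fun t ht => ?_) hxa
          rw [mul_comm]; exact step t ht
        exact PoissonAux.rpg_isRadical B _ (Ideal.mem_radical_iff.mpr ⟨2, by rwa [pow_two]⟩)
      · refine PoissonAux.rpg_le B hPP hPR ?_
        intro z hz
        rw [hFabdef, Finset.coe_image₂] at hz
        obtain ⟨t, ht, u, hu, rfl⟩ := hz
        refine memP a b (t * u) hab ?_ ?_
        · rw [hFa]
          exact Ideal.mul_mem_right u _ (PoissonAux.subset_rpg B _ ht)
        · rw [hFb]
          exact Ideal.mul_mem_left _ t (PoissonAux.subset_rpg B _ hu)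
    obtain ⟨FSig, hFSigP, s, hsP, hPdiv⟩ := hyp P hprime hPP
    obtain ⟨F0, hF0⟩ := hgood s hsP
    obtain ⟨F1, hF1sub, hF1⟩ :=
      PoissonAux.rpg_finite_basis_subset B ((↑P : Set A) ∪ {s}) F0 hF0
    set F : Finset A := F1.erase s with hFdef
    have hFP : (↑F : Set A) ⊆ (P : Set A) := by
      intro t ht
      have ht' : t ∈ F1.erase s := by exact_mod_cast ht
      obtain ⟨htns, htF1⟩ := Finset.mem_erase.mp ht'
      rcases hF1sub (by exact_mod_cast htF1) with h | h
      · exact h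
      · exact absurd (Set.mem_singleton_iff.mp h) htns
    have hPs' : radPoissonGen B ((↑P : Set A) ∪ {s}) =
        radPoissonGen B ((↑F : Set A) ∪ {s}) := by
      apply le_antisymm
      · rw [hF1]
        apply PoissonAux.rpg_mono B
        intro t ht
        by_cases hts : t = s
        · exact Or.inr (by rw [hts]; rfl)
        · refine Or.inl ?_
          exact_mod_cast Finset.mem_erase.mpr ⟨hts, by exact_mod_cast ht⟩
      · apply PoissonAux.rpg_mono B
        rintro t (ht | ht)
        · exact Or.inl (hFP ht)
        · exact Or.inr ht
    apply hPnb
    refine ⟨FSig ∪ F, le_antisymm ?_ ?_⟩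
    · intro x hx
      have hxPs : x ∈ radPoissonGen B ((↑F : Set A) ∪ {s}) := by
        rw [← hPs']; exact PoissonAux.subset_rpg B _ (Or.inl hx)
      have hxs : x * s ∈ radPoissonGen B (↑FSig : Set A) := by
        rw [hPdiv] at hx; exact hx
      have hxx : x * x ∈ radPoissonGen B (↑(FSig ∪ F) : Set A) := by
        refine PoissonAux.scale_mem B hd (PoissonAux.rpg_isPoisson B _)
          (PoissonAux.rpg_isRadical B _) (fun t ht => ?_) hxPs
        rcases ht with ht | ht
        · refine Ideal.mul_mem_left _ x (PoissonAux.subset_rpg B _ ?_)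
          rw [Finset.coe_union]; exact Or.inr ht
        · rw [Set.mem_singleton_iff] at ht; subst ht
          refine PoissonAux.rpg_mono B ?_ hxs
          rw [Finset.coe_union]; exact Set.subset_union_left
      exact PoissonAux.rpg_isRadical B _ (Ideal.mem_radical_iff.mpr ⟨2, by rwa [pow_two]⟩)
    · refine PoissonAux.rpg_le B hPP hPR ?_
      rw [Finset.coe_union]
      exact Set.union_subset hFSigP hFP
  intro c hcP hcR hmono
  set rc : Set (Ideal A) := Set.range c with hrc
  have hne : rc.Nonempty := ⟨c 0, 0, rfl⟩
  have hdir : DirectedOn (· ≤ ·) rc := by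
    rintro I ⟨m, rfl⟩ J ⟨n, rfl⟩
    exact ⟨c (max m n), ⟨max m n, rfl⟩, hmono (le_max_left m n), hmono (le_max_right m n)⟩
  obtain ⟨F, hF⟩ := main (sSup rc)
    (PoissonAux.sSup_isPoisson B hne hdir (by rintro I ⟨n, rfl⟩; exact hcP n))
    (PoissonAux.sSup_isRadical hne hdir (by rintro I ⟨n, rfl⟩; exact hcR n))
  obtain ⟨I, ⟨N, rfl⟩, hFI⟩ := PoissonAux.finset_subset_of_directed hne hdir F
    (fun x hx => by
      have : x ∈ radPoissonGen B (↑F : Set A) :=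
        PoissonAux.subset_rpg B _ (by exact_mod_cast hx)
      rwa [← hF] at this)
  have hsup_le : sSup rc ≤ c N := by
    rw [hF]
    exact PoissonAux.rpg_le B (hcP N) (hcR N) (fun x hx => hFI x (by exact_mod_cast hx))
  refine ⟨N, fun n hn => le_antisymm ?_ (hmono hn)⟩
  exact (le_sSup (Set.mem_range_self n)).trans hsup_le
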